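/- There is an absolute constant κ > 0 with the following property. For every integer n ≥ 2, every real c ≥ 1 such that t := c·(ln n)/n ≤ 1, every real δ with 0 < δ ≤ 1, and all natural numbers m_p and x with m_p ≤ n, m_p − n/c ≤ x ≤ m_p, and δ·n ≤ x, the following holds. Let B be a binomial random variable with x trials and success probability t, and let M = (n/(c·ln n))·B. Then Pr[|M − m_p| ≥ δ·n + n/c] ≤ 2·n^{−κ·δ²·c·n/m_p}. -/

import Mathlib

open Finset

/-- The probability that a binomial random variable with `N` trials and
success probability `t` takes the value `k`. -/
noncomputable def binomPMF (N : ℕ) (t : ℝ) (k : ℕ) : ℝ :=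
  (N.choose k : ℝ) * t ^ k * (1 - t) ^ (N - k)


lemma exp_upper {u : ℝ} (h0 : 0 ≤ u) (h1 : u ≤ 1/2) : Real.exp u ≤ 1 + u + 2*u^2 := by
  have h2 : (0:ℝ) < 1 - u := by linarith
  have ha : 1 - u ≤ Real.exp (-u) := by have := Real.add_one_le_exp (-u); linarith
  have h3 : Real.exp u * (1 - u) ≤ 1 := by
    calc Real.exp u * (1-u) ≤ Real.exp u * Real.exp (-u) :=
          mul_le_mul_of_nonneg_left ha (Real.exp_pos u).le
    _ = 1 := by rw [← Real.exp_add]; simp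
  nlinarith [mul_nonneg (sq_nonneg u) (by linarith : (0:ℝ) ≤ 1 - 2*u)]

lemma exp_neg_upper {u : ℝ} (h0 : 0 ≤ u) : Real.exp (-u) ≤ 1 - u + u^2 := by
  have h1 : 1 + u ≤ Real.exp u := by have := Real.add_one_le_exp u; linarith
  have h2 : Real.exp (-u) * Real.exp u = 1 := by rw [← Real.exp_add]; simp
  have h3 : (0:ℝ) ≤ 1 - u + u^2 := by nlinarith [sq_nonneg (2*u-1)]
  nlinarith [Real.exp_pos u, mul_le_mul_of_nonneg_left h1 h3, pow_nonneg h0 3]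

lemma tail_ge (x : ℕ) (t a l : ℝ) (ht0 : 0 ≤ t) (ht1 : t ≤ 1) (hl : 0 ≤ l) :
    (∑ k ∈ Finset.range (x+1), (if a ≤ (k:ℝ) then binomPMF x t k else 0))
      ≤ Real.exp (-(l*a)) * (t * Real.exp l + (1 - t))^x := by
  have h1t : (0:ℝ) ≤ 1 - t := by linarith
  have key : ∀ k ∈ Finset.range (x+1),
      (if a ≤ (k:ℝ) then binomPMF x t k else 0)
        ≤ Real.exp (-(l*a)) * ((t * Real.exp l) ^ k * (1 - t) ^ (x - k) * (x.choose k : ℝ)) := by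
    intro k _
    have hpos : (0:ℝ) ≤ (t * Real.exp l) ^ k * (1 - t) ^ (x - k) * (x.choose k : ℝ) := by
      positivity
    split
    · next h =>
      have hek : (t * Real.exp l) ^ k = Real.exp (l * k) * t ^ k := by
        rw [mul_pow, ← Real.exp_nat_mul]; ring_nf
      rw [hek]
      have : binomPMF x t k = 1 * binomPMF x t k := (one_mul _).symm
      rw [this]
      have hfac : (1:ℝ) ≤ Real.exp (-(l*a)) * Real.exp (l * k) := by
        rw [← Real.exp_add]
        refine Real.one_le_exp ?_
        nlinarith
      have hbn : (0:ℝ) ≤ binomPMF x t k := by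
        unfold binomPMF; positivity
      calc 1 * binomPMF x t k ≤ (Real.exp (-(l*a)) * Real.exp (l * k)) * binomPMF x t k :=
            mul_le_mul_of_nonneg_right hfac hbn
        _ = Real.exp (-(l*a)) * (Real.exp (l * k) * t ^ k * (1 - t) ^ (x - k) * (x.choose k : ℝ)) := by
            unfold binomPMF; ring
    · positivity
  calc (∑ k ∈ Finset.range (x+1), (if a ≤ (k:ℝ) then binomPMF x t k else 0))
      ≤ ∑ k ∈ Finset.range (x+1),
          Real.exp (-(l*a)) * ((t * Real.exp l) ^ k * (1 - t) ^ (x - k) * (x.choose k : ℝ)) :=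
        Finset.sum_le_sum key
    _ = Real.exp (-(l*a)) * ∑ k ∈ Finset.range (x+1),
          (t * Real.exp l) ^ k * (1 - t) ^ (x - k) * (x.choose k : ℝ) := by
        rw [Finset.mul_sum]
    _ = Real.exp (-(l*a)) * (t * Real.exp l + (1 - t))^x := by rw [← add_pow]

lemma tail_le (x : ℕ) (t a l : ℝ) (ht0 : 0 ≤ t) (ht1 : t ≤ 1) (hl : 0 ≤ l) :
    (∑ k ∈ Finset.range (x+1), (if (k:ℝ) ≤ a then binomPMF x t k else 0))
      ≤ Real.exp (l*a) * (t * Real.exp (-l) + (1 - t))^x := by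
  have h1t : (0:ℝ) ≤ 1 - t := by linarith
  have key : ∀ k ∈ Finset.range (x+1),
      (if (k:ℝ) ≤ a then binomPMF x t k else 0)
        ≤ Real.exp (l*a) * ((t * Real.exp (-l)) ^ k * (1 - t) ^ (x - k) * (x.choose k : ℝ)) := by
    intro k _
    split
    · next h =>
      have hek : (t * Real.exp (-l)) ^ k = Real.exp (-(l * k)) * t ^ k := by
        rw [mul_pow, ← Real.exp_nat_mul]; ring_nf
      rw [hek]
      have hfac : (1:ℝ) ≤ Real.exp (l*a) * Real.exp (-(l * k)) := by
        rw [← Real.exp_add]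
        refine Real.one_le_exp ?_
        nlinarith
      have hbn : (0:ℝ) ≤ binomPMF x t k := by
        unfold binomPMF; positivity
      calc binomPMF x t k = 1 * binomPMF x t k := (one_mul _).symm
        _ ≤ (Real.exp (l*a) * Real.exp (-(l * k))) * binomPMF x t k :=
            mul_le_mul_of_nonneg_right hfac hbn
        _ = Real.exp (l*a) * (Real.exp (-(l * k)) * t ^ k * (1 - t) ^ (x - k) * (x.choose k : ℝ)) := by
            unfold binomPMF; ring
    · positivity
  calc (∑ k ∈ Finset.range (x+1), (if (k:ℝ) ≤ a then binomPMF x t k else 0))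
      ≤ ∑ k ∈ Finset.range (x+1),
          Real.exp (l*a) * ((t * Real.exp (-l)) ^ k * (1 - t) ^ (x - k) * (x.choose k : ℝ)) :=
        Finset.sum_le_sum key
    _ = Real.exp (l*a) * ∑ k ∈ Finset.range (x+1),
          (t * Real.exp (-l)) ^ k * (1 - t) ^ (x - k) * (x.choose k : ℝ) := by
        rw [Finset.mul_sum]
    _ = Real.exp (l*a) * (t * Real.exp (-l) + (1 - t))^x := by rw [← add_pow]

lemma chernoff_upper (x : ℕ) (t s : ℝ) (ht0 : 0 < t) (ht1 : t ≤ 1)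
    (hs : 0 < s) (hsm : s ≤ x * t) :
    (∑ k ∈ Finset.range (x+1), (if (x:ℝ)*t + s ≤ (k:ℝ) then binomPMF x t k else 0))
      ≤ Real.exp (-(s^2 / (8 * (x * t)))) := by
  set μ : ℝ := (x:ℝ) * t with hμ
  have hμ0 : 0 < μ := lt_of_lt_of_le hs hsm
  set l : ℝ := s / (4 * μ) with hldef
  have hl0 : 0 < l := by positivity
  have hl12 : l ≤ 1/2 := by
    rw [hldef, div_le_iff₀ (by positivity)]; nlinarith
  have step1 := tail_ge x t (μ + s) l ht0.le ht1 hl0.le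
  have base : t * Real.exp l + (1 - t) ≤ Real.exp (t * (Real.exp l - 1)) := by
    have := Real.add_one_le_exp (t * (Real.exp l - 1))
    linarith
  have base0 : (0:ℝ) ≤ t * Real.exp l + (1 - t) := by
    have := (Real.exp_pos l).le
    nlinarith
  have step2 : (t * Real.exp l + (1 - t))^x ≤ Real.exp (μ * (Real.exp l - 1)) := by
    calc (t * Real.exp l + (1 - t))^x ≤ (Real.exp (t * (Real.exp l - 1)))^x :=
          pow_le_pow_left₀ base0 base x
      _ = Real.exp ((x:ℝ) * (t * (Real.exp l - 1))) := (Real.exp_nat_mul _ x).symm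
      _ = Real.exp (μ * (Real.exp l - 1)) := by rw [hμ]; ring_nf
  have step3 : Real.exp l - 1 ≤ l + 2*l^2 := by
    have := exp_upper hl0.le hl12; linarith
  have expo : -(l * (μ + s)) + μ * (l + 2*l^2) ≤ -(s^2 / (8 * μ)) := by
    have : -(l * (μ + s)) + μ * (l + 2*l^2) = -(s^2 / (8 * μ)) := by
      rw [hldef]; field_simp; ring
    linarith
  calc (∑ k ∈ Finset.range (x+1), (if (x:ℝ)*t + s ≤ (k:ℝ) then binomPMF x t k else 0))
      ≤ Real.exp (-(l*(μ+s))) * (t * Real.exp l + (1 - t))^x := step1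
    _ ≤ Real.exp (-(l*(μ+s))) * Real.exp (μ * (Real.exp l - 1)) :=
        mul_le_mul_of_nonneg_left step2 (Real.exp_pos _).le
    _ = Real.exp (-(l*(μ+s)) + μ * (Real.exp l - 1)) := (Real.exp_add _ _).symm
    _ ≤ Real.exp (-(s^2 / (8 * μ))) := by
        apply Real.exp_le_exp.mpr
        have h4 : μ * (Real.exp l - 1) ≤ μ * (l + 2*l^2) :=
          mul_le_mul_of_nonneg_left step3 hμ0.le
        linarith [expo]
    _ = Real.exp (-(s^2 / (8 * (x * t)))) := by rw [hμ]

lemma chernoff_lower (x : ℕ) (t s : ℝ) (ht0 : 0 < t) (ht1 : t ≤ 1)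
    (hs : 0 < s) (hsm : s ≤ x * t) :
    (∑ k ∈ Finset.range (x+1), (if (k:ℝ) ≤ (x:ℝ)*t - s then binomPMF x t k else 0))
      ≤ Real.exp (-(s^2 / (8 * (x * t)))) := by
  set μ : ℝ := (x:ℝ) * t with hμ
  have hμ0 : 0 < μ := lt_of_lt_of_le hs hsm
  set l : ℝ := s / (2 * μ) with hldef
  have hl0 : 0 < l := by positivity
  have step1 := tail_le x t (μ - s) l ht0.le ht1 hl0.le
  have base : t * Real.exp (-l) + (1 - t) ≤ Real.exp (t * (Real.exp (-l) - 1)) := by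
    have := Real.add_one_le_exp (t * (Real.exp (-l) - 1))
    linarith
  have base0 : (0:ℝ) ≤ t * Real.exp (-l) + (1 - t) := by
    have := (Real.exp_pos (-l)).le
    nlinarith
  have step2 : (t * Real.exp (-l) + (1 - t))^x ≤ Real.exp (μ * (Real.exp (-l) - 1)) := by
    calc (t * Real.exp (-l) + (1 - t))^x ≤ (Real.exp (t * (Real.exp (-l) - 1)))^x :=
          pow_le_pow_left₀ base0 base x
      _ = Real.exp ((x:ℝ) * (t * (Real.exp (-l) - 1))) := (Real.exp_nat_mul _ x).symm
      _ = Real.exp (μ * (Real.exp (-l) - 1)) := by rw [hμ]; ring_nf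
  have step3 : Real.exp (-l) - 1 ≤ -l + l^2 := by
    have := exp_neg_upper hl0.le; linarith
  have expo : l * (μ - s) + μ * (-l + l^2) ≤ -(s^2 / (8 * μ)) := by
    have heq : l * (μ - s) + μ * (-l + l^2) = -(s^2 / (4 * μ)) := by
      rw [hldef]; field_simp; ring
    have : s^2 / (8 * μ) ≤ s^2 / (4 * μ) := by
      apply div_le_div_of_nonneg_left (sq_nonneg s) (by positivity) (by linarith)
    linarith
  calc (∑ k ∈ Finset.range (x+1), (if (k:ℝ) ≤ (x:ℝ)*t - s then binomPMF x t k else 0))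
      ≤ Real.exp (l*(μ-s)) * (t * Real.exp (-l) + (1 - t))^x := step1
    _ ≤ Real.exp (l*(μ-s)) * Real.exp (μ * (Real.exp (-l) - 1)) :=
        mul_le_mul_of_nonneg_left step2 (Real.exp_pos _).le
    _ = Real.exp (l*(μ-s) + μ * (Real.exp (-l) - 1)) := (Real.exp_add _ _).symm
    _ ≤ Real.exp (-(s^2 / (8 * μ))) := by
        apply Real.exp_le_exp.mpr
        have h4 : μ * (Real.exp (-l) - 1) ≤ μ * (-l + l^2) :=
          mul_le_mul_of_nonneg_left step3 hμ0.le
        linarith [expo]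
    _ = Real.exp (-(s^2 / (8 * (x * t)))) := by rw [hμ]

/-- There is an absolute constant `κ > 0` such that for every `n ≥ 2`,
`c ≥ 1` with `t := c * ln n / n ≤ 1`, `0 < δ ≤ 1` and naturals `m_p`, `x`
with `m_p ≤ n`, `m_p - n / c ≤ x ≤ m_p` and `δ * n ≤ x`, if `B` is a
binomial random variable with `x` trials and success probability `t` and
`M = (n / (c * ln n)) * B`, then
`Pr[|M - m_p| ≥ δ * n + n / c] ≤ 2 * n ^ (-κ * δ² * c * n / m_p)`. -/
theorem binomial_estimator_absolute_error :
    ∃ κ : ℝ, 0 < κ ∧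
      ∀ n : ℕ, 2 ≤ n →
      ∀ c : ℝ, 1 ≤ c → c * Real.log n / n ≤ 1 →
      ∀ δ : ℝ, 0 < δ → δ ≤ 1 →
      ∀ mp x : ℕ, mp ≤ n → (mp : ℝ) - n / c ≤ x → x ≤ mp → δ * n ≤ x →
        (∑ k ∈ Finset.range (x + 1),
            if δ * n + n / c ≤
                |((n : ℝ) / (c * Real.log n)) * k - mp| then
              binomPMF x (c * Real.log n / n) k
            else 0)
          ≤ 2 * (n : ℝ) ^ (-(κ * δ ^ 2 * c * n / mp)) := by
  refine ⟨1/8, by norm_num, ?_⟩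
  intro n hn c hc ht1' δ hδ0 hδ1 mp x hmpn hxlo hxmp hδx
  have hn2 : (2:ℝ) ≤ (n:ℝ) := by exact_mod_cast hn
  have hn0 : (0:ℝ) < n := by linarith
  have hL : 0 < Real.log n := Real.log_pos (by linarith)
  have hc0 : (0:ℝ) < c := by linarith
  set t : ℝ := c * Real.log n / n with htdef
  have ht0 : 0 < t := by positivity
  have ht1 : t ≤ 1 := ht1'
  set s : ℝ := δ * n * t with hsdef
  have hs : 0 < s := by positivity
  have hxt : (x:ℝ) ≤ (mp:ℝ) := by exact_mod_cast hxmp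
  have hsm : s ≤ x * t := by
    rw [hsdef]
    exact mul_le_mul_of_nonneg_right hδx ht0.le
  have hx0 : (0:ℝ) < x := lt_of_lt_of_le (by positivity) hδx
  have hmp0 : (0:ℝ) < mp := lt_of_lt_of_le hx0 hxt
  have hrt : (n:ℝ) / (c * Real.log n) * t = 1 := by
    rw [htdef]; field_simp
  -- pointwise split
  have hsplit : ∀ k ∈ Finset.range (x + 1),
      (if δ * n + n / c ≤ |((n : ℝ) / (c * Real.log n)) * k - mp| then
          binomPMF x t k else 0)
        ≤ (if (x:ℝ)*t + s ≤ (k:ℝ) then binomPMF x t k else 0)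
          + (if (k:ℝ) ≤ (x:ℝ)*t - s then binomPMF x t k else 0) := by
    intro k _
    have hbn : (0:ℝ) ≤ binomPMF x t k := by
      unfold binomPMF
      have : (0:ℝ) ≤ 1 - t := by linarith
      positivity
    have h1 : (0:ℝ) ≤ (if (x:ℝ)*t + s ≤ (k:ℝ) then binomPMF x t k else 0) := by
      split <;> simp [hbn]
    have h2 : (0:ℝ) ≤ (if (k:ℝ) ≤ (x:ℝ)*t - s then binomPMF x t k else 0) := by
      split <;> simp [hbn]
    split
    · next h =>
      set r : ℝ := (n:ℝ) / (c * Real.log n) with hrdef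
      have hr0 : 0 < r := by rw [hrdef]; positivity
      rcases le_abs.mp h with h' | h'
      · -- r*k - mp ≥ δn + n/c ⇒ k ≥ x*t + s
        have hk : (x:ℝ)*t + s ≤ (k:ℝ) := by
          have hmul : (δ * n + n / c + mp) * t ≤ (r * k) * t :=
            mul_le_mul_of_nonneg_right (by linarith) ht0.le
          have hrk : (r * k) * t = k := by
            rw [mul_comm r (k:ℝ), mul_assoc, hrt, mul_one]
          have hnc : 0 ≤ (n:ℝ)/c * t := by positivity
          have hexp : (δ * n + n / c + mp) * t = s + (n:ℝ)/c * t + mp * t := by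
            rw [hsdef]; ring
          have hmpx : (x:ℝ) * t ≤ (mp:ℝ) * t :=
            mul_le_mul_of_nonneg_right hxt ht0.le
          rw [hrk] at hmul
          rw [hexp] at hmul
          linarith
        rw [if_pos hk]
        linarith
      · -- r*k - mp ≤ -(δn + n/c) ⇒ k ≤ x*t - s
        have hk : (k:ℝ) ≤ (x:ℝ)*t - s := by
          have h'' : r * k ≤ mp - δ * n - n / c := by linarith
          have hmul : (r * k) * t ≤ (mp - δ * n - n / c) * t :=
            mul_le_mul_of_nonneg_right h'' ht0.le
          have hrk : (r * k) * t = k := by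
            rw [mul_comm r (k:ℝ), mul_assoc, hrt, mul_one]
          have hexp : ((mp:ℝ) - δ * n - n / c) * t = ((mp:ℝ) - n/c) * t - s := by
            rw [hsdef]; ring
          have hmpx : ((mp:ℝ) - n/c) * t ≤ (x:ℝ) * t :=
            mul_le_mul_of_nonneg_right hxlo ht0.le
          rw [hrk, hexp] at hmul
          linarith
        rw [if_pos hk]
        linarith
    · positivity
  have hsum : (∑ k ∈ Finset.range (x + 1),
        if δ * n + n / c ≤ |((n : ℝ) / (c * Real.log n)) * k - mp| then
          binomPMF x t k else 0)
      ≤ (∑ k ∈ Finset.range (x+1), (if (x:ℝ)*t + s ≤ (k:ℝ) then binomPMF x t k else 0))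
        + (∑ k ∈ Finset.range (x+1), (if (k:ℝ) ≤ (x:ℝ)*t - s then binomPMF x t k else 0)) := by
    rw [← Finset.sum_add_distrib]
    exact Finset.sum_le_sum hsplit
  have hch1 := chernoff_upper x t s ht0 ht1 hs hsm
  have hch2 := chernoff_lower x t s ht0 ht1 hs hsm
  have hmono : Real.exp (-(s^2 / (8 * (x * t)))) ≤ Real.exp (-(s^2 / (8 * (mp * t)))) := by
    apply Real.exp_le_exp.mpr
    have h1 : s^2 / (8 * (mp * t)) ≤ s^2 / (8 * (x * t)) := by
      apply div_le_div_of_nonneg_left (sq_nonneg s) (by positivity)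
      have : (x:ℝ) * t ≤ (mp:ℝ) * t := mul_le_mul_of_nonneg_right hxt ht0.le
      linarith
    linarith
  have hfinal : Real.exp (-(s^2 / (8 * (mp * t))))
      = (n : ℝ) ^ (-((1:ℝ)/8 * δ ^ 2 * c * n / mp)) := by
    rw [Real.rpow_def_of_pos hn0]
    congr 1
    rw [hsdef, htdef]
    have hne : (n:ℝ) ≠ 0 := ne_of_gt hn0
    have hmpne : (mp:ℝ) ≠ 0 := ne_of_gt hmp0
    field_simp
  calc (∑ k ∈ Finset.range (x + 1),
        if δ * n + n / c ≤ |((n : ℝ) / (c * Real.log n)) * k - mp| then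
          binomPMF x t k else 0)
      ≤ _ + _ := hsum
    _ ≤ Real.exp (-(s^2 / (8 * (x * t)))) + Real.exp (-(s^2 / (8 * (x * t)))) :=
        add_le_add hch1 hch2
    _ = 2 * Real.exp (-(s^2 / (8 * (x * t)))) := by ring
    _ ≤ 2 * Real.exp (-(s^2 / (8 * (mp * t)))) := by linarith [hmono]
    _ = 2 * (n : ℝ) ^ (-((1:ℝ)/8 * δ ^ 2 * c * n / mp)) := by rw [hfinal]
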